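/- Finite-dimensional version of weak properness of Λ^{n−1}T_{1,0}: let V be an n-dimensional complex vector space with a fixed background Hermitian inner product h. For a positive-definite Hermitian form g on V, let Λ^{n−1}g denote the induced Hermitian form on Λ^{n−1}V. If Λ^{n−1}g ≤ C·Λ^{n−1}h and det g ≥ det h (determinants with respect to an h-orthonormal basis), then g ≤ C'·h for a constant C' depending only on C and n. -/

import Mathlib

open Matrix
open scoped ComplexOrder

lemma bilin_conj {n : ℕ} (P A : Matrix (Fin n) (Fin n) ℂ) (y z : Fin n → ℂ) :
    star (P *ᵥ y) ⬝ᵥ A *ᵥ (P *ᵥ z) = star y ⬝ᵥ (Pᴴ * A * P) *ᵥ z := by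
  simp [star_mulVec, dotProduct_mulVec, vecMul_vecMul, Matrix.mul_assoc]

lemma single_bilin {n : ℕ} (A : Matrix (Fin n) (Fin n) ℂ) (a b : Fin n) :
    star (Pi.single a (1:ℂ)) ⬝ᵥ A *ᵥ (Pi.single b 1) = A a b := by
  simp [dotProduct, mulVec_single, Pi.single_apply, apply_ite, Finset.sum_ite_eq']

lemma diag_quad_re {n : ℕ} (c : Fin n → ℝ) (y : Fin n → ℂ) :
    (star y ⬝ᵥ (Matrix.diagonal (fun i => (c i : ℂ))) *ᵥ y).re
      = ∑ i, c i * Complex.normSq (y i) := by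
  simp only [dotProduct, mulVec_diagonal, Complex.re_sum, Pi.star_apply, Complex.normSq_apply,
    Complex.star_def, Complex.mul_re, Complex.conj_re, Complex.conj_im, Complex.ofReal_re,
    Complex.ofReal_im, Complex.mul_im]
  exact Finset.sum_congr rfl fun i _ => by ring

lemma key_scalar {m : ℕ} (hm : 1 ≤ m) (C : ℝ) (d : Fin (m+1) → ℝ)
    (hd : ∀ i, 0 < d i) (hprod : 1 ≤ ∏ i, d i)
    (hC : ∀ k : Fin (m+1), ∏ j ∈ Finset.univ.erase k, d j ≤ C) :
    (0 < C) ∧ ∀ i, d i ≤ C ^ m := by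
  have hCpos : 0 < C :=
    lt_of_lt_of_le (Finset.prod_pos fun j _ => hd j) (hC 0)
  refine ⟨hCpos, fun i => ?_⟩
  have hlow : ∀ j, C⁻¹ ≤ d j := by
    intro j
    have h1 : d j * ∏ t ∈ Finset.univ.erase j, d t = ∏ t, d t :=
      Finset.mul_prod_erase _ _ (Finset.mem_univ j)
    rw [inv_le_iff_one_le_mul₀ hCpos]
    calc (1:ℝ) ≤ ∏ t, d t := hprod
    _ = d j * ∏ t ∈ Finset.univ.erase j, d t := h1.symm
    _ ≤ d j * C := by nlinarith [hC j, hd j]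
  obtain ⟨k, hk⟩ : ∃ k : Fin (m+1), k ≠ i := by
    rcases eq_or_ne (i:ℕ) 0 with h0 | h0
    · exact ⟨⟨1, by omega⟩, by intro h; apply_fun Fin.val at h; simp at h; omega⟩
    · exact ⟨⟨0, by omega⟩, by intro h; apply_fun Fin.val at h; simp at h; omega⟩
  have hik : i ∈ Finset.univ.erase k := Finset.mem_erase.mpr ⟨hk.symm, Finset.mem_univ i⟩
  have h1 : d i * ∏ t ∈ (Finset.univ.erase k).erase i, d t = ∏ t ∈ Finset.univ.erase k, d t :=
    Finset.mul_prod_erase _ _ hik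
  have hcard : ((Finset.univ.erase k).erase i).card = m - 1 := by
    rw [Finset.card_erase_of_mem hik, Finset.card_erase_of_mem (Finset.mem_univ k)]
    simp
  have hbound : C⁻¹ ^ (m-1) ≤ ∏ t ∈ (Finset.univ.erase k).erase i, d t := by
    calc C⁻¹ ^ (m-1) = ∏ _t ∈ (Finset.univ.erase k).erase i, C⁻¹ := by
          rw [Finset.prod_const, hcard]
    _ ≤ _ := Finset.prod_le_prod (fun _ _ => inv_nonneg.mpr hCpos.le) (fun t _ => hlow t)
  have hmain : d i * C⁻¹ ^ (m-1) ≤ C := by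
    calc d i * C⁻¹ ^ (m-1) ≤ d i * ∏ t ∈ (Finset.univ.erase k).erase i, d t :=
          mul_le_mul_of_nonneg_left hbound (hd i).le
    _ = ∏ t ∈ Finset.univ.erase k, d t := h1
    _ ≤ C := hC k
  have hm1 : m - 1 + 1 = m := by omega
  have hCne : C ≠ 0 := hCpos.ne'
  calc d i = d i * C⁻¹ ^ (m-1) * C ^ (m-1) := by rw [inv_pow, inv_mul_cancel_right₀ (pow_ne_zero _ hCne)]
  _ ≤ C * C ^ (m-1) := mul_le_mul_of_nonneg_right hmain (pow_nonneg hCpos.le _)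
  _ = C ^ m := by rw [← pow_succ']; rw [hm1]


/-- The Hermitian form induced on `Λ^{n-1}V` by a Hermitian form `g` on `V ≅ ℂⁿ`,
evaluated on the decomposable element `v₁ ∧ … ∧ v_{n-1}` (in `Λ^{n-1}` of an
`n`-dimensional space every element is decomposable): the Gram determinant
`det (⟨v_i, v_j⟩_g)`. -/
noncomputable def lamQuad (n : ℕ) (g : Matrix (Fin n) (Fin n) ℂ)
    (v : Fin (n - 1) → Fin n → ℂ) : ℝ :=
  (Matrix.det (Matrix.of fun i j => star (v i) ⬝ᵥ g.mulVec (v j))).re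

/-- weak properness of `Λ^{n-1}T_{1,0}` (finite-dimensional
version).  If `g, h` are positive-definite Hermitian forms on an
`n`-dimensional complex vector space with `Λ^{n-1}g ≤ C·Λ^{n-1}h` and
`det g ≥ det h`, then `g ≤ C'·h` with `C'` depending only on `C` and `n`. -/
theorem stmt_5 (n : ℕ) (hn : 2 ≤ n) (C : ℝ) :
    ∃ C' : ℝ, 0 < C' ∧
      ∀ g h : Matrix (Fin n) (Fin n) ℂ, g.PosDef → h.PosDef →
        (∀ v : Fin (n - 1) → Fin n → ℂ, lamQuad n g v ≤ C * lamQuad n h v) →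
        h.det.re ≤ g.det.re →
        ∀ x : Fin n → ℂ,
          (star x ⬝ᵥ g.mulVec x).re ≤ C' * (star x ⬝ᵥ h.mulVec x).re := by
  obtain ⟨m, rfl⟩ : ∃ m, n = m + 1 := ⟨n - 1, by omega⟩
  have hm : 1 ≤ m := by omega
  refine ⟨(max C 1) ^ m, by positivity, ?_⟩
  intro g h hg hh hlam hdet x
  classical
  -- square root of h
  have hhsd := hh.posSemidef
  open scoped MatrixOrder in have hB : (CFC.sqrt h).PosSemidef := (CFC.sqrt_nonneg h).posSemidef
  open scoped MatrixOrder in set B := CFC.sqrt h with hBdef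
  have hBH : B.IsHermitian := hB.1
  have hBB : B * B = h := by
    open scoped MatrixOrder in exact CFC.sqrt_mul_sqrt_self h hhsd.nonneg
  have hdetB : IsUnit B.det := by
    have h1 : B.det * B.det = h.det := by rw [← det_mul, hBB]
    have h2 : h.det ≠ 0 := hh.det_pos.ne'
    have h3 : B.det ≠ 0 := by intro h0; rw [h0, mul_zero] at h1; exact h2 h1.symm
    exact h3.isUnit
  have hBunit : IsUnit B := (Matrix.isUnit_iff_isUnit_det B).mpr hdetB
  have hBiB : B⁻¹ * B = 1 := nonsing_inv_mul _ hdetB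
  have hBBi : B * B⁻¹ = 1 := mul_nonsing_inv _ hdetB
  have hBinvH : B⁻¹.IsHermitian := hBH.inv
  have hBinvUnit : IsUnit (B⁻¹) := isUnit_nonsing_inv_iff.mpr hBunit
  set M := B⁻¹ * g * B⁻¹ with hMdef
  have hMH : M.IsHermitian := by
    show Mᴴ = M
    rw [hMdef]
    simp [conjTranspose_mul, hBinvH.eq, hg.1.eq, Matrix.mul_assoc]
  have hMpd : M.PosDef := by
    refine Matrix.PosDef.of_dotProduct_mulVec_pos hMH (fun z hz => ?_)
    have hz' : B⁻¹ *ᵥ z ≠ 0 := by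
      intro h0
      have hinj := Matrix.mulVec_injective_iff_isUnit.mpr hBinvUnit
      exact hz (hinj (by simpa using h0))
    have hq := bilin_conj (B⁻¹) g z z
    rw [hBinvH.eq] at hq
    rw [hMdef, ← hq]
    exact hg.dotProduct_mulVec_pos hz'
  set U : Matrix (Fin (m+1)) (Fin (m+1)) ℂ := (hMH.eigenvectorUnitary : Matrix (Fin (m+1)) (Fin (m+1)) ℂ) with hUdef
  set d : Fin (m+1) → ℝ := hMH.eigenvalues with hddef
  have hdpos : ∀ i, 0 < d i := hMpd.eigenvalues_pos
  have hU1 : Uᴴ * U = 1 := by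
    rw [← star_eq_conjTranspose]
    exact (Unitary.mem_iff.mp hMH.eigenvectorUnitary.2).1
  have hU2 : U * Uᴴ = 1 := by
    rw [← star_eq_conjTranspose]
    exact (Unitary.mem_iff.mp hMH.eigenvectorUnitary.2).2
  have hspec : Uᴴ * M * U = Matrix.diagonal (fun i => ((d i : ℝ) : ℂ)) := by
    rw [← star_eq_conjTranspose]
    have h' := hMH.conjStarAlgAut_star_eigenvectorUnitary
    simp only [Unitary.conjStarAlgAut_star_apply, Unitary.coe_star] at h'
    exact h'
  set P := B⁻¹ * U with hPdef
  have hPH : Pᴴ = Uᴴ * B⁻¹ := by rw [hPdef, conjTranspose_mul, hBinvH.eq]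
  have hhBiB : B⁻¹ * h * B⁻¹ = 1 := by
    rw [← hBB, show B⁻¹ * (B * B) * B⁻¹ = (B⁻¹ * B) * (B * B⁻¹) by
      simp [Matrix.mul_assoc], hBiB, hBBi, one_mul]
  have hPh : Pᴴ * h * P = 1 := by
    rw [hPH, hPdef, show Uᴴ * B⁻¹ * h * (B⁻¹ * U) = Uᴴ * (B⁻¹ * h * B⁻¹) * U by
      simp [Matrix.mul_assoc], hhBiB, Matrix.mul_one, hU1]
  have hPg : Pᴴ * g * P = Matrix.diagonal (fun i => ((d i : ℝ) : ℂ)) := by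
    rw [hPH, hPdef, show Uᴴ * B⁻¹ * g * (B⁻¹ * U) = Uᴴ * (B⁻¹ * g * B⁻¹) * U by
      simp [Matrix.mul_assoc], ← hMdef, hspec]
  have hUunit : IsUnit U := ⟨⟨U, Uᴴ, hU2, hU1⟩, rfl⟩
  have hPunit : IsUnit P := hBinvUnit.mul hUunit
  -- determinant relations
  have e_g : g.det * ((Complex.normSq P.det : ℝ) : ℂ) = ∏ i, ((d i : ℝ) : ℂ) := by
    have h1 : det (Pᴴ * g * P) = star P.det * g.det * P.det := by
      rw [det_mul, det_mul, det_conjTranspose]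
    rw [hPg, det_diagonal] at h1
    rw [h1, show star P.det * g.det * P.det
        = g.det * (P.det * (starRingEnd ℂ) P.det) by rw [Complex.star_def]; ring,
      Complex.mul_conj]
  have e_h : h.det * ((Complex.normSq P.det : ℝ) : ℂ) = 1 := by
    have h1 : det (Pᴴ * h * P) = star P.det * h.det * P.det := by
      rw [det_mul, det_mul, det_conjTranspose]
    rw [hPh, det_one] at h1
    rw [h1, show star P.det * h.det * P.det
        = h.det * (P.det * (starRingEnd ℂ) P.det) by rw [Complex.star_def]; ring,
      Complex.mul_conj]
  have hgre : g.det = ((g.det.re : ℝ) : ℂ) := by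
    have := hg.det_pos; rw [Complex.lt_def] at this
    apply Complex.ext <;> simp [this.2.symm]
  have hhre : h.det = ((h.det.re : ℝ) : ℂ) := by
    have := hh.det_pos; rw [Complex.lt_def] at this
    apply Complex.ext <;> simp [this.2.symm]
  have hhre_pos : 0 < h.det.re := by
    have := hh.det_pos; rw [Complex.lt_def] at this; simpa using this.1
  -- real determinant relations
  set s : ℝ := Complex.normSq P.det with hsdef
  have e_g' : g.det.re * s = ∏ i, d i := by
    have := e_g
    rw [hgre, ← Complex.ofReal_mul, ← Complex.ofReal_prod] at this
    exact_mod_cast this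
  have e_h' : h.det.re * s = 1 := by
    have := e_h
    rw [hhre, ← Complex.ofReal_mul] at this
    exact_mod_cast this
  have hs_nonneg : 0 ≤ s := Complex.normSq_nonneg _
  have hprod : 1 ≤ ∏ i, d i := by
    calc (1:ℝ) = h.det.re * s := e_h'.symm
    _ ≤ g.det.re * s := mul_le_mul_of_nonneg_right hdet hs_nonneg
    _ = ∏ i, d i := e_g'
  -- instantiate the hypothesis at coordinate frames omitting k
  have hCk : ∀ k : Fin (m+1), ∏ j ∈ Finset.univ.erase k, d j ≤ C := by
    intro k
    set v : Fin (m+1-1) → Fin (m+1) → ℂ :=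
      fun i => P *ᵥ Pi.single (k.succAbove i) 1 with hvdef
    have hentry : ∀ (A : Matrix (Fin (m+1)) (Fin (m+1)) ℂ) (i j : Fin (m+1-1)),
        star (v i) ⬝ᵥ A *ᵥ (v j) = (Pᴴ * A * P) (k.succAbove i) (k.succAbove j) := by
      intro A i j
      rw [hvdef]
      rw [bilin_conj, single_bilin]
    have hGg : (Matrix.of fun i j => star (v i) ⬝ᵥ g *ᵥ (v j))
        = Matrix.diagonal (fun i : Fin (m+1-1) => ((d (k.succAbove i) : ℝ) : ℂ)) := by
      ext i j
      rw [Matrix.of_apply, hentry, hPg]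
      rcases eq_or_ne i j with rfl | hij
      · simp [Matrix.diagonal_apply]
      · rw [Matrix.diagonal_apply_ne _ (fun hc => hij (Fin.succAbove_right_injective hc)),
          Matrix.diagonal_apply_ne _ hij]
    have hGh : (Matrix.of fun i j => star (v i) ⬝ᵥ h *ᵥ (v j)) = 1 := by
      ext i j
      rw [Matrix.of_apply, hentry, hPh]
      rcases eq_or_ne i j with rfl | hij
      · simp
      · rw [Matrix.one_apply_ne (fun hc => hij (Fin.succAbove_right_injective hc)),
          Matrix.one_apply_ne hij]
    have hlq_g : lamQuad (m+1) g v = ∏ i : Fin (m+1-1), d (k.succAbove i) := by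
      rw [lamQuad, hGg, det_diagonal, ← Complex.ofReal_prod, Complex.ofReal_re]
    have hlq_h : lamQuad (m+1) h v = 1 := by
      rw [lamQuad, hGh, det_one, Complex.one_re]
    have := hlam v
    rw [hlq_g, hlq_h, mul_one] at this
    -- convert product over succAbove to product over erase
    have hconv : d k * ∏ i : Fin m, d (k.succAbove i) = d k * ∏ j ∈ Finset.univ.erase k, d j := by
      rw [← Fin.prod_univ_succAbove d k, Finset.mul_prod_erase _ _ (Finset.mem_univ k)]
    have hconv2 : ∏ i : Fin m, d (k.succAbove i) = ∏ j ∈ Finset.univ.erase k, d j :=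
      mul_left_cancel₀ (hdpos k).ne' hconv
    rw [← hconv2]
    exact this
  obtain ⟨hCpos, hdC⟩ := key_scalar hm C d hdpos hprod hCk
  have hdC' : ∀ i, d i ≤ (max C 1) ^ m := fun i =>
    le_trans (hdC i) (pow_le_pow_left₀ hCpos.le (le_max_left C 1) m)
  -- final computation
  obtain ⟨y, hy⟩ := (mulVec_surjective_iff_isUnit.mpr hPunit) x
  have hgx : (star x ⬝ᵥ g *ᵥ x).re = ∑ i, d i * Complex.normSq (y i) := by
    rw [← hy, bilin_conj, hPg, diag_quad_re]
  have hhx : (star x ⬝ᵥ h *ᵥ x).re = ∑ i, Complex.normSq (y i) := by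
    rw [← hy, bilin_conj, hPh]
    have : (1 : Matrix (Fin (m+1)) (Fin (m+1)) ℂ)
        = Matrix.diagonal (fun i => ((1:ℝ) : ℂ)) := by simp [Matrix.diagonal_one]
    rw [this, diag_quad_re]
    simp
  rw [hgx, hhx, Finset.mul_sum]
  exact Finset.sum_le_sum fun i _ =>
    mul_le_mul_of_nonneg_right (hdC' i) (Complex.normSq_nonneg _)
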